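/- A characteristic sample forces a lower bound on the number of states: if M = (I,O,Q,q0,δ,λ) is a minimal Moore machine and S_IO is a characteristic sample for M, then every complete Moore machine M' = (I,O,Q',q0',δ',λ') over the same alphabets I and O that is consistent with every trace in S_IO satisfies |Q'| ≥ |Q|. -/

import Mathlib

/-- A (complete, deterministic) Moore machine with input alphabet `I`,
output alphabet `O`, state set `Q`, initial state `init`, total transition
function `trans` and total output function `out`. -/
structure Moore (I O Q : Type) where
  init : Q
  trans : Q → I → Q
  out : Q → O

namespace Moore

variable {I O Q : Type}

/-- Extended transition function: `δ*(q,ε)=q` and `δ*(q,w·a)=δ(δ*(q,w),a)`. -/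
def deltaStar (M : Moore I O Q) (q : Q) (w : List I) : Q :=
  w.foldl M.trans q

/-- Extended output function: `λ*(q,w)` lists the output `λ(δ*(q,u))` for
every prefix `u` of `w` in order; this satisfies `λ*(q,ε)=λ(q)` and
`λ*(q,w·a)=λ*(q,w)·λ(δ*(q,w·a))`. -/
def lambdaStar (M : Moore I O Q) (q : Q) (w : List I) : List O :=
  w.inits.map fun u => M.out (M.deltaStar q u)

/-- Two Moore machines over the same alphabets are equivalent iff they produce
the same output word on every input word. -/
def Equivalent {Q' : Type} (M : Moore I O Q) (M' : Moore I O Q') : Prop :=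
  ∀ w : List I, M.lambdaStar M.init w = M'.lambdaStar M'.init w

/-- `M` is minimal iff every Moore machine equivalent to `M` has at least as
many states. -/
def Minimal [Fintype Q] (M : Moore I O Q) : Prop :=
  ∀ (Q' : Type) [Fintype Q'] (M' : Moore I O Q'),
    M.Equivalent M' → Fintype.card Q ≤ Fintype.card Q'

end Moore

/-- Shortlex ("length then lexicographic") strict order on words. -/
def ShortlexLt {I : Type} [LinearOrder I] (w w' : List I) : Prop :=
  w.length < w'.length ∨ (w.length = w'.length ∧ List.Lex (· < ·) w w')

/-- `w` is the shortlex-least element of the set `S` of words. -/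
def IsShortlexLeast {I : Type} [LinearOrder I] (S : Set (List I)) (w : List I) : Prop :=
  w ∈ S ∧ ∀ v ∈ S, w = v ∨ ShortlexLt w v

/-- The set of all prefixes of words in `S`. -/
def wordPrefixes {I : Type} (S : Set (List I)) : Set (List I) :=
  {u | ∃ w ∈ S, u <+: w}

namespace Moore

variable {I O Q : Type}

/-- `SP` is the shortest-prefix map of `M`: for every state `q`, `SP q` is the
shortlex-least word reaching `q` from the initial state. -/
def IsShortestPrefixMap [LinearOrder I] (M : Moore I O Q) (SP : Q → List I) : Prop :=
  ∀ q : Q, IsShortlexLeast {w | M.deltaStar M.init w = q} (SP q)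

/-- The nucleus `N_L(M)`: the empty word together with all one-letter
extensions of shortest prefixes. -/
def nucleus (_M : Moore I O Q) (SP : Q → List I) : Set (List I) :=
  {[]} ∪ {w | ∃ q : Q, ∃ a : I, w = SP q ++ [a]}

/-- `MD` is a minimum-distinguishing-suffix map of `M`: for all distinct
states `qu qv`, `MD qu qv` is the shortlex-least word on which the outputs
from `qu` and from `qv` differ. -/
def IsMinDistSuffixMap [LinearOrder I] (M : Moore I O Q) (MD : Q → Q → List I) : Prop :=
  ∀ qu qv : Q, qu ≠ qv →
    IsShortlexLeast {w | M.lambdaStar qu w ≠ M.lambdaStar qv w} (MD qu qv)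

/-- `M` is consistent with the Moore `(I,O)`-trace `t = (ρI, ρO)` iff running
`M` on `ρI` from the initial state produces `ρO`. -/
def ConsistentTrace (M : Moore I O Q) (t : List I × List O) : Prop :=
  M.lambdaStar M.init t.1 = t.2

/-- `S` is a characteristic sample for `M` (with shortest-prefix map `SP` and
minimum-distinguishing-suffix map `MD`):
(1) the nucleus is contained in the prefixes of the input words of `S`, and
(2) for all `u ∈ S_P(M)` and `v ∈ N_L(M)` reaching different states, both
`u·w` and `v·w` are prefixes of input words of `S`, where `w` is the minimum
distinguishing suffix of the two states. -/
def CharSample [LinearOrder I] (M : Moore I O Q) (SP : Q → List I)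
    (MD : Q → Q → List I) (S : Set (List I × List O)) : Prop :=
  M.nucleus SP ⊆ wordPrefixes (Prod.fst '' S) ∧
  ∀ u ∈ Set.range SP, ∀ v ∈ M.nucleus SP,
    M.deltaStar M.init u ≠ M.deltaStar M.init v →
      u ++ MD (M.deltaStar M.init u) (M.deltaStar M.init v) ∈ wordPrefixes (Prod.fst '' S) ∧
      v ++ MD (M.deltaStar M.init u) (M.deltaStar M.init v) ∈ wordPrefixes (Prod.fst '' S)

end Moore



section Aux

variable {I O Q : Type}

namespace Moore

lemma deltaStar_append (M : Moore I O Q) (q : Q) (u v : List I) :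
    M.deltaStar q (u ++ v) = M.deltaStar (M.deltaStar q u) v :=
  List.foldl_append

lemma lambdaStar_append (M : Moore I O Q) (q : Q) (u v : List I) :
    M.lambdaStar q (u ++ v) =
      M.lambdaStar q u ++ (M.lambdaStar (M.deltaStar q u) v).tail := by
  simp only [lambdaStar, List.inits_append, List.map_append, List.map_tail, List.map_map]
  congr 1
  congr 1
  ext p
  simp [Function.comp, deltaStar_append]

lemma lambdaStar_length (M : Moore I O Q) (q : Q) (w : List I) :
    (M.lambdaStar q w).length = w.length + 1 := by
  simp [lambdaStar]

lemma lambdaStar_head (M : Moore I O Q) (q : Q) (w : List I) :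
    M.lambdaStar q w = M.out q :: (M.lambdaStar q w).tail := by
  cases w with
  | nil => simp [lambdaStar, deltaStar]
  | cons a w => simp [lambdaStar, deltaStar, List.inits]

lemma lambdaStar_getLast? (M : Moore I O Q) (q : Q) (u : List I) :
    (M.lambdaStar q u).getLast? = some (M.out (M.deltaStar q u)) := by
  induction u using List.reverseRecOn with
  | nil => simp [lambdaStar, deltaStar]
  | append_singleton u a ih =>
      rw [lambdaStar_append]
      have : (M.lambdaStar (M.deltaStar q u) [a]).tail
          = [M.out (M.trans (M.deltaStar q u) a)] := by
        simp [lambdaStar, deltaStar, List.inits]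
      rw [this, List.getLast?_append, deltaStar_append]
      simp [deltaStar]

end Moore

lemma lex_append {I : Type} [LinearOrder I] :
    ∀ {u v : List I}, List.Lex (· < ·) u v → u.length = v.length →
      ∀ (x y : List I), List.Lex (· < ·) (u ++ x) (v ++ y) := by
  intro u v h
  induction h with
  | nil => intro hlen; simp at hlen
  | cons h ih =>
      intro hlen x y
      exact List.Lex.cons (ih (by simpa using hlen) x y)
  | rel h =>
      intro _ x y
      exact List.Lex.rel h

lemma shortlexLt_asymm {I : Type} [LinearOrder I] {u v : List I}
    (h : ShortlexLt u v) (h' : ShortlexLt v u) : False := by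
  rcases h with h | ⟨he, h⟩ <;> rcases h' with h' | ⟨he', h'⟩
  · omega
  · omega
  · omega
  · exact asymm h h'

lemma shortlexLt_append {I : Type} [LinearOrder I] {u v : List I} (a : I)
    (h : ShortlexLt u v) : ShortlexLt (u ++ [a]) (v ++ [a]) := by
  rcases h with h | ⟨he, h⟩
  · left; simpa using h
  · right
    exact ⟨by simp [he], lex_append h he _ _⟩

lemma mem_wordPrefixes_of_prefix {I : Type} {T : Set (List I)} {u v : List I}
    (h : u <+: v) (hv : v ∈ wordPrefixes T) : u ∈ wordPrefixes T := by
  obtain ⟨x, hx, hvx⟩ := hv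
  exact ⟨x, hx, h.trans hvx⟩

lemma sp_mem_nucleus [LinearOrder I] (M : Moore I O Q) (SP : Q → List I)
    (hSP : M.IsShortestPrefixMap SP) (q : Q) : SP q ∈ M.nucleus SP := by
  rcases List.eq_nil_or_concat (SP q) with h | ⟨w, a, h⟩
  · left; simp [h]
  all_goals rw [List.concat_eq_append] at h
  · right
    refine ⟨M.deltaStar M.init w, a, ?_⟩
    set p := M.deltaStar M.init w with hp
    have hq : M.deltaStar M.init (SP q) = q := (hSP q).1
    have hqa : M.deltaStar M.init (w ++ [a]) = q := by rw [← h]; exact hq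
    have hSPp : M.deltaStar M.init (SP p) = p := (hSP p).1
    have hcase := (hSP p).2 w rfl
    have hSPpw : SP p = w := by
      rcases hcase with h1 | h1
      · exact h1
      · exfalso
        have hreach : M.deltaStar M.init (SP p ++ [a]) = q := by
          rw [Moore.deltaStar_append, hSPp]
          rw [Moore.deltaStar_append] at hqa
          exact hqa
        have h2 := (hSP q).2 (SP p ++ [a]) hreach
        have h3 : ShortlexLt (SP p ++ [a]) (SP q) := by
          rw [h]; exact shortlexLt_append a h1
        rcases h2 with h2 | h2
        · rw [← h2] at h3; exact shortlexLt_asymm h3 h3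
        · exact shortlexLt_asymm h2 h3
    rw [h, hSPpw]

lemma moore_agree {I O Q Q' : Type} (M : Moore I O Q) (M' : Moore I O Q')
    (S : Set (List I × List O))
    (hc : ∀ t ∈ S, M.ConsistentTrace t) (hc' : ∀ t ∈ S, M'.ConsistentTrace t)
    {u : List I} (hu : u ∈ wordPrefixes (Prod.fst '' S)) :
    M.lambdaStar M.init u = M'.lambdaStar M'.init u := by
  obtain ⟨x, ⟨t, ht, hx⟩, hux⟩ := hu
  obtain ⟨r, hr⟩ := hux
  have hM : M.lambdaStar M.init x = t.2 := by rw [← hx]; exact hc t ht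
  have hM' : M'.lambdaStar M'.init x = t.2 := by rw [← hx]; exact hc' t ht
  have h := hM.trans hM'.symm
  rw [← hr, Moore.lambdaStar_append, Moore.lambdaStar_append] at h
  exact (List.append_inj h (by simp [Moore.lambdaStar_length])).1

end Aux

/-- A characteristic sample forces a lower bound on the
number of states: every complete Moore machine consistent with a
characteristic sample of a minimal machine `M` has at least as many states
as `M`. -/
theorem charSample_state_lower_bound {I O Q Q' : Type} [LinearOrder I]
    [Fintype I] [Fintype O] [Fintype Q] [Fintype Q']
    (M : Moore I O Q) (hmin : M.Minimal)
    (SP : Q → List I) (hSP : M.IsShortestPrefixMap SP)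
    (MD : Q → Q → List I) (hMD : M.IsMinDistSuffixMap MD)
    (S : Set (List I × List O)) (hfin : S.Finite)
    (hcons : ∀ t ∈ S, M.ConsistentTrace t)
    (hCS : M.CharSample SP MD S)
    (M' : Moore I O Q') (hcons' : ∀ t ∈ S, M'.ConsistentTrace t) :
    Fintype.card Q ≤ Fintype.card Q' := by
  have hreach : ∀ q, M.deltaStar M.init (SP q) = q := fun q => (hSP q).1
  have key : Function.Injective (fun q => M'.deltaStar M'.init (SP q)) := by
    intro q1 q2 hq
    have hq' : M'.deltaStar M'.init (SP q1) = M'.deltaStar M'.init (SP q2) := hq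
    by_contra hne
    have hdist : M.lambdaStar q1 (MD q1 q2) ≠ M.lambdaStar q2 (MD q1 q2) :=
      (hMD q1 q2 hne).1
    have hne' : M.deltaStar M.init (SP q1) ≠ M.deltaStar M.init (SP q2) := by
      rw [hreach, hreach]; exact hne
    obtain ⟨h1, h2⟩ := hCS.2 (SP q1) ⟨q1, rfl⟩ (SP q2) (sp_mem_nucleus M SP hSP q2) hne'
    rw [hreach q1, hreach q2] at h1 h2
    set w := MD q1 q2 with hwdef
    have ep1 := moore_agree M M' S hcons hcons'
      (mem_wordPrefixes_of_prefix ⟨w, rfl⟩ h1)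
    have ep2 := moore_agree M M' S hcons hcons'
      (mem_wordPrefixes_of_prefix ⟨w, rfl⟩ h2)
    have e1 := moore_agree M M' S hcons hcons' h1
    have e2 := moore_agree M M' S hcons hcons' h2
    rw [Moore.lambdaStar_append, Moore.lambdaStar_append, hreach q1, ep1] at e1
    rw [Moore.lambdaStar_append, Moore.lambdaStar_append, hreach q2, ep2] at e2
    have t1 : (M.lambdaStar q1 w).tail
        = (M'.lambdaStar (M'.deltaStar M'.init (SP q1)) w).tail :=
      List.append_cancel_left e1
    have t2 : (M.lambdaStar q2 w).tail
        = (M'.lambdaStar (M'.deltaStar M'.init (SP q2)) w).tail :=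
      List.append_cancel_left e2
    have htails : (M.lambdaStar q1 w).tail = (M.lambdaStar q2 w).tail := by
      rw [t1, t2, hq']
    -- outputs agree
    have g1 : M.out q1 = M'.out (M'.deltaStar M'.init (SP q1)) := by
      have a1 : (M.lambdaStar M.init (SP q1)).getLast? = some (M.out q1) := by
        rw [Moore.lambdaStar_getLast?, hreach q1]
      rw [ep1, Moore.lambdaStar_getLast?] at a1
      exact (Option.some_injective _ a1).symm
    have g2 : M.out q2 = M'.out (M'.deltaStar M'.init (SP q2)) := by
      have a2 : (M.lambdaStar M.init (SP q2)).getLast? = some (M.out q2) := by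
        rw [Moore.lambdaStar_getLast?, hreach q2]
      rw [ep2, Moore.lambdaStar_getLast?] at a2
      exact (Option.some_injective _ a2).symm
    have houts : M.out q1 = M.out q2 := by rw [g1, g2, hq']
    exact hdist (by
      rw [Moore.lambdaStar_head M q1 w, Moore.lambdaStar_head M q2 w, houts, htails])
  exact Fintype.card_le_of_injective _ key
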